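/- arXiv:1512.02320 — 2 statements merged into one kernel-verified Lean document; each statement's English description precedes it below -/
import Mathlib

section
/- Let R be a commutative local ring and let I, J be ideals of R with I + J ≠ R. If u ∈ (R/I)^× and v ∈ (R/J)^× are units having the same image in (R/(I+J))^×, then there exists a unit w ∈ R^× whose images in R/I and R/J are u and v respectively. In other words, the sequence R^× → (R/I)^× × (R/J)^× → (R/(I+J))^× is exact at the middle term. -/
lemma aux_unit_lift {R : Type*} [CommRing R] [IsLocalRing R] {I : Ideal R}
    (hI : I ≤ IsLocalRing.maximalIdeal R) {a : R} (h : IsUnit (Ideal.Quotient.mk I a)) :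
    IsUnit a := by
  by_contra hna
  have ha : a ∈ IsLocalRing.maximalIdeal R := hna
  obtain ⟨b, hb⟩ := Ideal.Quotient.mk_surjective (h.unit⁻¹ : Units (R ⧸ I)).val
  have : Ideal.Quotient.mk I (a * b) = 1 := by
    rw [map_mul, hb]; exact h.mul_val_inv
  have hmem : a * b - 1 ∈ I :=
    Ideal.Quotient.eq.mp (by rw [this, map_one])
  have h1 : (1 : R) ∈ IsLocalRing.maximalIdeal R := by
    have : a * b - (a * b - 1) ∈ IsLocalRing.maximalIdeal R :=
      sub_mem (Ideal.mul_mem_right _ _ ha) (hI hmem)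
    simpa using this
  exact (IsLocalRing.maximalIdeal.isMaximal R).ne_top ((Ideal.eq_top_iff_one _).mpr h1)

/-- For a commutative local ring `R` and ideals `I, J` with `I + J ≠ R`, the
sequence `Rˣ → (R/I)ˣ × (R/J)ˣ → (R/(I+J))ˣ` is exact at the middle term. -/
theorem stmt_8 {R : Type*} [CommRing R] [IsLocalRing R]
    (I J : Ideal R) (hIJ : I + J ≠ ⊤)
    (u : (R ⧸ I)ˣ) (v : (R ⧸ J)ˣ)
    (huv : Units.map (Ideal.Quotient.factor (S := I) (T := I + J) le_sup_left).toMonoidHom u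
        = Units.map (Ideal.Quotient.factor (S := J) (T := I + J) le_sup_right).toMonoidHom v) :
    ∃ w : Rˣ,
      Units.map (Ideal.Quotient.mk I).toMonoidHom w = u ∧
      Units.map (Ideal.Quotient.mk J).toMonoidHom w = v := by
  have hm : I + J ≤ IsLocalRing.maximalIdeal R := IsLocalRing.le_maximalIdeal hIJ
  have hI : I ≤ IsLocalRing.maximalIdeal R := le_trans le_sup_left hm
  have hJ : J ≤ IsLocalRing.maximalIdeal R := le_trans le_sup_right hm
  obtain ⟨a, ha⟩ := Ideal.Quotient.mk_surjective (u : R ⧸ I)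
  obtain ⟨b, hb⟩ := Ideal.Quotient.mk_surjective (v : R ⧸ J)
  have hau : IsUnit a := aux_unit_lift hI (by rw [ha]; exact u.isUnit)
  have hdiff : a - b ∈ I + J := by
    have h1 : Ideal.Quotient.mk (I + J) a = Ideal.Quotient.mk (I + J) b := by
      have := congrArg Units.val huv
      simpa [Units.coe_map, ← ha, ← hb, Ideal.Quotient.factor_mk] using this
    rwa [Ideal.Quotient.eq] at h1
  obtain ⟨x, hx, y, hy, hxy⟩ := Submodule.mem_sup.mp hdiff
  set w : R := a - x with hw
  have hwu : IsUnit w := by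
    by_contra hnw
    have : a ∈ IsLocalRing.maximalIdeal R := by
      have : w + x ∈ IsLocalRing.maximalIdeal R := add_mem hnw (hI hx)
      simpa [hw] using this
    exact (this : a ∈ nonunits R) hau
  have hwb : w = b + y := by
    have : a - b = x + y := hxy.symm
    rw [hw]; linear_combination this
  refine ⟨hwu.unit, ?_, ?_⟩
  · ext
    have : Ideal.Quotient.mk I w = Ideal.Quotient.mk I a := by
      rw [Ideal.Quotient.eq]; simpa [hw] using neg_mem hx
    simpa [this, ha] using rfl
  · ext
    have : Ideal.Quotient.mk J w = Ideal.Quotient.mk J b := by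
      rw [Ideal.Quotient.eq, hwb]; simpa using hy
    simpa [this, hb] using rfl
end

section
/- A morphism of schemes that is faithfully flat (flat and surjective) is an epimorphism in the category of schemes. -/
open AlgebraicGeometry

universe u
open Module in
lemma aux_sum_unit {S : Type*} [CommRing S] [IsLocalRing S] {ι : Type*} (s : Finset ι)
    (f : ι → S) (h : IsUnit (∑ i ∈ s, f i)) : ∃ i ∈ s, IsUnit (f i) := by
  induction s using Finset.cons_induction with
  | empty => rw [Finset.sum_empty] at h; exact absurd h not_isUnit_zero
  | cons a s ha ih =>
    rw [Finset.sum_cons] at h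
    rcases IsLocalRing.isUnit_or_isUnit_of_isUnit_add h with h1 | h2
    · exact ⟨a, Finset.mem_cons_self _ _, h1⟩
    · obtain ⟨i, hi, hu⟩ := ih h2
      exact ⟨i, Finset.mem_cons_of_mem hi, hu⟩

lemma aux_flat_inj {R S : Type u} [CommRing R] [CommRing S] [IsLocalRing R] [IsLocalRing S]
    (φ : R →+* S) (hf : φ.Flat) [IsLocalHom φ] : Function.Injective φ := by
  letI := φ.toAlgebra
  haveI : Module.Flat R S := hf
  rw [injective_iff_map_eq_zero]
  intro r hr
  have hx : (Algebra.linearMap R S) r = 0 := hr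
  obtain ⟨κ, a, y, hxy, haf⟩ :=
    Module.Flat.exists_factorization_of_apply_eq_zero_of_free hx
  set g : Fin κ →₀ R := a 1 with hg
  have h1 : (1 : S) = ∑ k ∈ g.support, φ (g k) * y (Finsupp.single k 1) := by
    have h1' : (1 : S) = y g := by
      have := congrArg (fun t : R →ₗ[R] S => t 1) hxy
      simpa using this
    rw [h1']
    conv_lhs => rw [← Finsupp.sum_single g]
    rw [map_finsuppSum, Finsupp.sum]
    refine Finset.sum_congr rfl fun k _ => ?_
    rw [← Finsupp.smul_single_one, map_smul, Algebra.smul_def]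
    rfl
  obtain ⟨k, hk, hu⟩ := aux_sum_unit _ _ (h1 ▸ isUnit_one)
  have hgk : IsUnit (g k) := IsLocalHom.map_nonunit _ (isUnit_of_mul_isUnit_left hu)
  have hrg : r * g k = 0 := by
    have : a (r • 1) = 0 := by simpa using haf
    rw [map_smul] at this
    have := congrArg (fun t : Fin κ →₀ R => t k) this
    simpa [smul_eq_mul] using this
  have : r * g k = 0 * g k := by rw [hrg, zero_mul]
  exact hgk.mul_right_cancel this

open AlgebraicGeometry CategoryTheory

lemma aux_germ_app_congr {X Z : Scheme} {k k' : X ⟶ Z} (hk : k = k') (U : Z.Opens)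
    (s : Z.presheaf.obj (Opposite.op U)) (x : X) (hx : x ∈ k ⁻¹ᵁ U) :
    X.presheaf.germ (k ⁻¹ᵁ U) x hx (k.app U s) =
      X.presheaf.germ (k' ⁻¹ᵁ U) x (hk ▸ hx) (k'.app U s) := by
  subst hk; rfl

/-- A faithfully flat (flat on stalks and surjective) morphism of schemes is an
epimorphism in the category of schemes. -/
theorem stmt_14 {X Y : Scheme} (f : X ⟶ Y)
    (hflat : ∀ x : X, RingHom.Flat (f.stalkMap x).hom)
    (hsurj : Function.Surjective f.base) :
    CategoryTheory.Epi f := by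
  have hinj : ∀ x : X, Function.Injective (f.stalkMap x) := fun x =>
    aux_flat_inj _ (hflat x)
  constructor
  intro Z g h hgh
  have hpt : ∀ y : Y, g.base y = h.base y := by
    intro y
    obtain ⟨x, rfl⟩ := hsurj y
    have := congrArg (fun k : X ⟶ Z => k.base x) hgh
    simpa using this
  have hbase : g.base = h.base := by ext y; exact hpt y
  apply Scheme.Hom.ext hbase
  intro U
  ext s
  apply TopCat.Presheaf.section_ext Y.sheaf
  intro y hy
  obtain ⟨x, rfl⟩ := hsurj y
  -- simplify composite application
  rw [CommRingCat.comp_apply]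
  show Y.presheaf.germ _ _ _ _ = Y.presheaf.germ _ _ _ _
  rw [TopCat.Presheaf.germ_res_apply' Y.presheaf _ (f.base x) hy (g.app U s)]
  have hgx : f.base x ∈ g ⁻¹ᵁ U := show g.base (f.base x) ∈ U by rw [hpt]; exact hy
  rw [← Scheme.Hom.germ_stalkMap_apply g U (f.base x) hgx s, ← Scheme.Hom.germ_stalkMap_apply h U (f.base x) hy s]
  apply hinj x
  have lhs : f.stalkMap x (g.stalkMap (f.base x) (Z.presheaf.germ U (g.base (f.base x)) hgx s)) =
      X.presheaf.germ ((f ≫ g) ⁻¹ᵁ U) x hgx ((f ≫ g).app U s) := by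
    rw [← CommRingCat.comp_apply, ← Scheme.Hom.stalkMap_comp f g x]
    exact Scheme.Hom.germ_stalkMap_apply (f ≫ g) U x hgx s
  have rhs : f.stalkMap x (h.stalkMap (f.base x) (Z.presheaf.germ U (h.base (f.base x)) hy s)) =
      X.presheaf.germ ((f ≫ h) ⁻¹ᵁ U) x hy ((f ≫ h).app U s) := by
    rw [← CommRingCat.comp_apply, ← Scheme.Hom.stalkMap_comp f h x]
    exact Scheme.Hom.germ_stalkMap_apply (f ≫ h) U x hy s
  rw [lhs, rhs]
  exact aux_germ_app_congr hgh U s x hgx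
end
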